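/- Hölder/averaging lemma used in the beta-number summation: let (𝒬, σ) be a finite measure space with σ(𝒬) > 0, let g ≥ 0 be measurable, let N : 𝒬 → [1, ∞] be measurable with average ⨍_𝒬 N dσ ≤ A < ∞, and let h := ess inf_𝒬 g. Then h² σ(𝒬) ≤ A² ∫_𝒬 g² N^{-2} dσ (interpreting N^{-2} = 0 where N = ∞). -/

import Mathlib

open MeasureTheory
open scoped ENNReal

/-- Hölder/averaging lemma used in the beta-number summation. On a finite
measure space of positive measure, if `N ≥ 1` has average at most `A < ∞` and
`h = ess inf g`, then `h² μ(𝒬) ≤ A² ∫ g² N⁻² dμ` (with `N⁻² = 0` where `N = ∞`). -/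
theorem essInf_sq_le_holder {α : Type*} [MeasurableSpace α] (μ : Measure α)
    [IsFiniteMeasure μ] (hμ : 0 < μ Set.univ) (g N : α → ℝ≥0∞)
    (hg : Measurable g) (hN : Measurable N) (hN1 : ∀ x, 1 ≤ N x)
    (A : ℝ≥0∞) (hA : A ≠ ∞) (havg : ∫⁻ x, N x ∂μ ≤ A * μ Set.univ) :
    (essInf g μ) ^ 2 * μ Set.univ ≤ A ^ 2 * ∫⁻ x, g x ^ 2 * (N x)⁻¹ ^ 2 ∂μ := by
  have hμfin : μ Set.univ ≠ ∞ := measure_ne_top μ _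
  have hint : ∫⁻ x, N x ∂μ ≠ ∞ :=
    ne_top_of_le_ne_top (ENNReal.mul_ne_top hA hμfin) havg
  have hNfin : ∀ᵐ x ∂μ, N x ≠ ∞ := (ae_lt_top hN hint).mono fun x hx => hx.ne
  set f : α → ℝ≥0∞ := fun x => (N x)⁻¹ ^ ((2:ℝ)/3) with hf_def
  set k : α → ℝ≥0∞ := fun x => N x ^ ((2:ℝ)/3) with hk_def
  have h1 : ∀ᵐ x ∂μ, (f * k) x = 1 := by
    filter_upwards [hNfin] with x hx
    have h0 : N x ≠ 0 := fun h => by simpa [h] using hN1 x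
    simp only [f, k, Pi.mul_apply]
    rw [← ENNReal.mul_rpow_of_ne_top (ENNReal.inv_ne_top.mpr h0) hx,
      ENNReal.inv_mul_cancel h0 hx, ENNReal.one_rpow]
  have hpq : (3:ℝ).HolderConjugate (3/2) := by rw [Real.holderConjugate_iff]; constructor <;> norm_num
  have hfm : Measurable f := ENNReal.continuous_rpow_const.measurable.comp hN.inv
  have hkm : Measurable k := ENNReal.continuous_rpow_const.measurable.comp hN
  have holder := ENNReal.lintegral_mul_le_Lp_mul_Lq μ hpq hfm.aemeasurable hkm.aemeasurable
  set I : ℝ≥0∞ := ∫⁻ x, (N x)⁻¹ ^ 2 ∂μ with hI_def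
  have hf3 : ∀ x, f x ^ (3:ℝ) = (N x)⁻¹ ^ 2 := fun x => by
    rw [hf_def, ← ENNReal.rpow_natCast _ 2, ← ENNReal.rpow_mul]
    norm_num
  have hk32 : ∀ x, k x ^ ((3:ℝ)/2) = N x := fun x => by
    rw [hk_def, ← ENNReal.rpow_mul]
    norm_num
  have hμle : μ Set.univ ≤ I ^ ((1:ℝ)/3) * (A * μ Set.univ) ^ (2/3 : ℝ) := by
    calc μ Set.univ = ∫⁻ x, (f * k) x ∂μ := by
          rw [lintegral_congr_ae h1, lintegral_one]
      _ ≤ (∫⁻ x, f x ^ (3:ℝ) ∂μ) ^ ((1:ℝ)/3) * (∫⁻ x, k x ^ ((3:ℝ)/2) ∂μ) ^ ((1:ℝ)/(3/2)) :=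
          holder
      _ = (∫⁻ x, (N x)⁻¹ ^ 2 ∂μ) ^ ((1:ℝ)/3) * (∫⁻ x, N x ∂μ) ^ ((2:ℝ)/3) := by
          simp_rw [hf3, hk32]; norm_num
      _ ≤ I ^ ((1:ℝ)/3) * (A * μ Set.univ) ^ ((2:ℝ)/3) := by
          gcongr
  have hcube : μ Set.univ ^ 3 ≤ I * (A * μ Set.univ) ^ 2 := by
    have h3 := ENNReal.rpow_le_rpow hμle (by norm_num : (0:ℝ) ≤ 3)
    rw [ENNReal.mul_rpow_of_nonneg _ _ (by norm_num), ← ENNReal.rpow_mul,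
      ← ENNReal.rpow_mul] at h3
    norm_num at h3
    exact h3
  have hkey : μ Set.univ ≤ A ^ 2 * I := by
    have h2 : μ Set.univ * μ Set.univ ^ 2 ≤ (A ^ 2 * I) * μ Set.univ ^ 2 := by
      calc μ Set.univ * μ Set.univ ^ 2 = μ Set.univ ^ 3 := by ring
        _ ≤ I * (A * μ Set.univ) ^ 2 := hcube
        _ = (A ^ 2 * I) * μ Set.univ ^ 2 := by ring
    exact (ENNReal.mul_le_mul_iff_left (pow_ne_zero 2 hμ.ne') (ENNReal.pow_ne_top hμfin)).mp h2
  have hginf : ∀ᵐ x ∂μ, essInf g μ ≤ g x := ae_essInf_le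
  calc essInf g μ ^ 2 * μ Set.univ ≤ essInf g μ ^ 2 * (A ^ 2 * I) := by gcongr
    _ = A ^ 2 * (essInf g μ ^ 2 * I) := by ring
    _ = A ^ 2 * ∫⁻ x, essInf g μ ^ 2 * (N x)⁻¹ ^ 2 ∂μ := by
        rw [hI_def, lintegral_const_mul (f := fun x => (N x)⁻¹ ^ 2) _ (hN.inv.pow_const 2)]
    _ ≤ A ^ 2 * ∫⁻ x, g x ^ 2 * (N x)⁻¹ ^ 2 ∂μ := by
        refine mul_le_mul_right (lintegral_mono_ae ?_) _
        filter_upwards [hginf] with x hx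
        gcongr
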